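/- Let K ⊆ ℝ^m be compact and nonempty, let α ∈ ℝ, and let f : K → ℝ be continuous with f(x) > 0 for all x ∈ K. Let (t_N) be a real sequence with t_N → 0 and t_N ≠ 0 for all N, and let h, h_1, h_2, … ∈ C(K) with ‖h_N − h‖_∞ → 0. Then sup_{x∈K} | ( (f(x) + t_N h_N(x))^α − f(x)^α ) / t_N − α f(x)^{α−1} h(x) | → 0 as N → ∞, where y^α denotes the real power. (That is, the map f ↦ f^α on (C(K), ‖·‖_∞) is Hadamard differentiable at every such f with derivative h ↦ α f^{α−1} h.) -/

import Mathlib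

open Filter Real

lemma aux_mvt {s : Set ℝ} (hs : Convex ℝ s) (hpos : ∀ z ∈ s, (0:ℝ) < z)
    {α C a b : ℝ} (ha : a ∈ s) (hb : b ∈ s)
    (bound : ∀ z ∈ s, |α * z ^ (α - 1) - α * a ^ (α - 1)| ≤ C) :
    |b ^ α - a ^ α - α * a ^ (α - 1) * (b - a)| ≤ C * |b - a| := by
  have H := hs.norm_image_sub_le_of_norm_hasFDerivWithin_le'
    (f := fun z : ℝ => z ^ α)
    (f' := fun z => ContinuousLinearMap.smulRight (1 : ℝ →L[ℝ] ℝ) (α * z ^ (α - 1)))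
    (φ := ContinuousLinearMap.smulRight (1 : ℝ →L[ℝ] ℝ) (α * a ^ (α - 1)))
    (C := C)
    (fun z hz => ((Real.hasDerivAt_rpow_const (p := α)
      (Or.inl (hpos z hz).ne')).hasDerivWithinAt).hasFDerivWithinAt)
    (fun z hz => ?_) ha hb
  · have : (ContinuousLinearMap.smulRight (1 : ℝ →L[ℝ] ℝ) (α * a ^ (α - 1))) (b - a)
        = α * a ^ (α - 1) * (b - a) := by
      simp [mul_comm]
    simpa [this, Real.norm_eq_abs] using H
  · have : ContinuousLinearMap.smulRight (1 : ℝ →L[ℝ] ℝ) (α * z ^ (α - 1))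
        - ContinuousLinearMap.smulRight (1 : ℝ →L[ℝ] ℝ) (α * a ^ (α - 1))
        = ContinuousLinearMap.smulRight (1 : ℝ →L[ℝ] ℝ)
            (α * z ^ (α - 1) - α * a ^ (α - 1)) := by
      ext; simp [smul_sub]
    rw [this, ContinuousLinearMap.norm_smulRight_apply]
    have h1 : ‖(1 : ℝ →L[ℝ] ℝ)‖ = 1 := by simp
    rw [h1, one_mul, Real.norm_eq_abs]
    exact bound z hz

theorem hadamard_rpow (m : ℕ) (K : Set (EuclideanSpace ℝ (Fin m)))
    (hK : IsCompact K) (hKne : K.Nonempty) (α : ℝ)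
    (f : EuclideanSpace ℝ (Fin m) → ℝ) (hf : ContinuousOn f K)
    (hfpos : ∀ x ∈ K, 0 < f x)
    (t : ℕ → ℝ) (ht : Tendsto t atTop (nhds 0)) (htne : ∀ N, t N ≠ 0)
    (h : EuclideanSpace ℝ (Fin m) → ℝ) (hN : ℕ → EuclideanSpace ℝ (Fin m) → ℝ)
    (hh : ContinuousOn h K) (hhN : ∀ N, ContinuousOn (hN N) K)
    (hconv : TendstoUniformlyOn hN h atTop K) :
    TendstoUniformlyOn
      (fun N x => ((f x + t N * hN N x) ^ α - f x ^ α) / t N)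
      (fun x => α * f x ^ (α - 1) * h x) atTop K := by
  rw [Metric.tendstoUniformlyOn_iff]
  intro ε hε
  obtain ⟨x0, hx0K, hx0⟩ := hK.exists_isMinOn hKne hf
  obtain ⟨x1, hx1K, hx1⟩ := hK.exists_isMaxOn hKne hf
  set c := f x0 with hc
  have hcpos : 0 < c := hfpos x0 hx0K
  set C0 := f x1 with hC0
  have hcC0 : c ≤ C0 := hx1 hx0K
  obtain ⟨x2, hx2K, hx2⟩ := hK.exists_isMaxOn hKne hh.abs
  set M := |h x2| + 1 with hM
  have hMpos : 0 < M := by positivity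
  set J := Set.Icc (c/2) (C0 + c/2) with hJ
  have hJpos : ∀ z ∈ J, (0:ℝ) < z := fun z hz => lt_of_lt_of_le (by linarith) hz.1
  have hJcont : ContinuousOn (fun u : ℝ => α * u ^ (α - 1)) J := fun u hu =>
    (continuousAt_const.mul
      (Real.continuousAt_rpow_const u (α-1) (Or.inl (hJpos u hu).ne'))).continuousWithinAt
  have hJcomp : IsCompact J := isCompact_Icc
  have hJne : J.Nonempty := ⟨c/2, le_refl _, by linarith⟩
  obtain ⟨u0, hu0J, hu0⟩ := hJcomp.exists_isMaxOn hJne hJcont.abs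
  set D := |α * u0 ^ (α - 1)| with hD
  have hDnonneg : 0 ≤ D := abs_nonneg _
  have hUC := hJcomp.uniformContinuousOn_of_continuous hJcont
  rw [Metric.uniformContinuousOn_iff] at hUC
  have hε1 : 0 < ε / (2 * M) := by positivity
  obtain ⟨δ, hδpos, hδ⟩ := hUC (ε / (2 * M)) hε1
  have E1 : ∀ᶠ N in atTop, |t N| < min (c / (2 * M)) (δ / (2 * M)) := by
    have := Metric.tendsto_nhds.mp ht (min (c / (2 * M)) (δ / (2 * M))) (by positivity)
    simpa [Real.dist_eq] using this
  have E2 : ∀ᶠ N in atTop, ∀ x ∈ K, dist (h x) (hN N x) < min 1 (ε / (2 * (D + 1))) :=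
    Metric.tendstoUniformlyOn_iff.mp hconv _ (by positivity)
  filter_upwards [E1, E2] with N h1 h2
  intro x hxK
  have habs_t : 0 < |t N| := abs_pos.mpr (htne N)
  set a := f x with ha'
  set s := t N * hN N x with hs'
  set b := a + s with hb'
  have haK1 : c ≤ a := hx0 hxK
  have haK2 : a ≤ C0 := hx1 hxK
  -- bound |hN N x| ≤ M
  have hhx : |h x| ≤ M - 1 := by
    have h' : |h x| ≤ |h x2| := hx2 hxK
    simp only [hM]
    linarith
  have hdist1 : |h x - hN N x| < 1 :=
    lt_of_lt_of_le (by simpa [Real.dist_eq] using h2 x hxK) (min_le_left _ _)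
  have hhNx : |hN N x| ≤ M := by
    have : |hN N x| = |h x - (h x - hN N x)| := by ring_nf
    rw [this]
    calc |h x - (h x - hN N x)| ≤ |h x| + |h x - hN N x| := abs_sub _ _
      _ ≤ (M - 1) + 1 := by linarith
      _ = M := by ring
  -- |s| bounds
  have hsM : |s| ≤ |t N| * M := by
    rw [hs', abs_mul]
    exact mul_le_mul_of_nonneg_left hhNx (abs_nonneg _)
  have htc : |t N| ≤ c / (2 * M) := le_of_lt (lt_of_lt_of_le h1 (min_le_left _ _))
  have htδ : |t N| ≤ δ / (2 * M) := le_of_lt (lt_of_lt_of_le h1 (min_le_right _ _))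
  have htc' : |t N| * (2 * M) ≤ c := (le_div_iff₀ (by positivity)).mp htc
  have htδ' : |t N| * (2 * M) ≤ δ := (le_div_iff₀ (by positivity)).mp htδ
  have hsc : |s| ≤ c / 2 := by nlinarith
  have hsδ : |s| ≤ δ / 2 := by nlinarith
  -- the segment
  have haJ : a ∈ J := ⟨by linarith, by linarith⟩
  have hminb : a - |s| ≤ min a b := le_min (by linarith [abs_nonneg s]) (by
    have := neg_abs_le s; simp only [hb']; linarith)
  have hmaxb : max a b ≤ a + |s| := max_le (by linarith [abs_nonneg s]) (by
    have := le_abs_self s; simp only [hb']; linarith)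
  have hSsubJ : Set.Icc (min a b) (max a b) ⊆ J := fun z hz =>
    ⟨by have := hz.1; linarith, by have := hz.2; linarith⟩
  have hSpos : ∀ z ∈ Set.Icc (min a b) (max a b), (0:ℝ) < z := fun z hz =>
    hJpos z (hSsubJ hz)
  have bound : ∀ z ∈ Set.Icc (min a b) (max a b),
      |α * z ^ (α - 1) - α * a ^ (α - 1)| ≤ ε / (2 * M) := by
    intro z hz
    have hzJ := hSsubJ hz
    have hza : |z - a| ≤ |s| := abs_le.mpr ⟨by have := hz.1; linarith,
      by have := hz.2; linarith⟩
    have hdz : dist z a < δ := by rw [Real.dist_eq]; linarith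
    have := hδ z hzJ a haJ hdz
    rw [Real.dist_eq] at this
    exact this.le
  have key := aux_mvt (convex_Icc _ _) hSpos
    (a := a) (b := b) (α := α)
    ⟨min_le_left _ _, le_max_left _ _⟩ ⟨min_le_right _ _, le_max_right _ _⟩ bound
  have hbas : b - a = s := by rw [hb']; ring
  rw [hbas] at key
  -- decomposition
  have decomp : (b ^ α - a ^ α) / t N - α * a ^ (α - 1) * h x
      = (b ^ α - a ^ α - α * a ^ (α - 1) * s) / t N
        + α * a ^ (α - 1) * (hN N x - h x) := by
    rw [hs']
    field_simp [htne N]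
    ring
  -- first term
  have first : |b ^ α - a ^ α - α * a ^ (α - 1) * s| / |t N| ≤ ε / 2 := by
    rw [div_le_iff₀ habs_t]
    calc |b ^ α - a ^ α - α * a ^ (α - 1) * s| ≤ ε / (2 * M) * |s| := key
      _ ≤ ε / (2 * M) * (|t N| * M) := mul_le_mul_of_nonneg_left hsM (le_of_lt hε1)
      _ = ε / 2 * |t N| := by field_simp
  -- second term
  have haD : |α * a ^ (α - 1)| ≤ D := hu0 haJ
  have hd2 : |hN N x - h x| ≤ ε / (2 * (D + 1)) := by
    have := lt_of_lt_of_le (by simpa [Real.dist_eq] using h2 x hxK) (min_le_right _ _)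
    rw [abs_sub_comm]
    linarith
  have second : |α * a ^ (α - 1) * (hN N x - h x)| ≤ D * (ε / (2 * (D + 1))) := by
    rw [abs_mul]
    exact mul_le_mul haD hd2 (abs_nonneg _) hDnonneg
  have hDlt : D * (ε / (2 * (D + 1))) < ε / 2 := by
    have e1 : D * (ε / (2 * (D + 1))) < (D + 1) * (ε / (2 * (D + 1))) :=
      mul_lt_mul_of_pos_right (by linarith) (by positivity)
    have e2 : (D + 1) * (ε / (2 * (D + 1))) = ε / 2 := by
      field_simp
    linarith
  -- assemble
  have : dist (α * a ^ (α - 1) * h x) ((b ^ α - a ^ α) / t N) < ε := by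
    rw [Real.dist_eq, abs_sub_comm, decomp]
    calc |(b ^ α - a ^ α - α * a ^ (α - 1) * s) / t N
          + α * a ^ (α - 1) * (hN N x - h x)|
        ≤ |(b ^ α - a ^ α - α * a ^ (α - 1) * s) / t N|
          + |α * a ^ (α - 1) * (hN N x - h x)| := abs_add_le _ _
      _ = |b ^ α - a ^ α - α * a ^ (α - 1) * s| / |t N|
          + |α * a ^ (α - 1) * (hN N x - h x)| := by rw [abs_div]
      _ < ε := by linarith
  simpa [hb', hs', ha'] using this
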